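/- Let G be a simple game with a nonempty set V of veto players, V ≠ N, and let G' be the game on N \ V where S is winning iff S ∪ V is winning in G. If G' is a simple game (i.e., the empty coalition is losing in G'), then for every m, G is m-trade robust if and only if G' is m-trade robust. -/
import Mathlib


/-- `⟨X; Y⟩` is a trading transform: every player belongs to as many `X`s as `Y`s. -/
def TradingTransform {n j : ℕ} (X Y : Fin j → Finset (Fin n)) : Prop :=
  ∀ a : Fin n,
    (Finset.univ.filter (fun i => a ∈ X i)).card =
      (Finset.univ.filter (fun i => a ∈ Y i)).card

/-- The game with winning predicate `W` on the coalitions contained in `D` is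
`m`-trade robust. -/
def TradeRobustOn {n : ℕ} (D : Finset (Fin n)) (W : Finset (Fin n) → Prop)
    (m : ℕ) : Prop :=
  ¬ ∃ (j : ℕ) (_ : 0 < j) (_ : j ≤ m) (X Y : Fin j → Finset (Fin n)),
      (∀ i, X i ⊆ D) ∧ (∀ i, Y i ⊆ D) ∧ TradingTransform X Y ∧
      (∀ i, W (X i)) ∧ (∀ i, ¬ W (Y i))

/-- Removing veto players does not affect `m`-trade robustness, provided the
reduced structure `G'` (on `N \ V`, with `S` winning iff `S ∪ V` is winning in `G`)
is again a simple game, i.e., the empty coalition is losing in `G'`. -/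
theorem stmt7 (n : ℕ) (W : Finset (Fin n) → Prop)
    (hmono : ∀ S T, S ⊆ T → W S → W T)
    (hne : ∃ S, W S) (hproper : ¬ W ∅)
    (V : Finset (Fin n)) (hV : ∀ i : Fin n, i ∈ V ↔ ∀ S, W S → i ∈ S)
    (hVne : V.Nonempty) (hVN : V ≠ Finset.univ)
    (hG' : ¬ W V)
    (m : ℕ) :
    TradeRobustOn Finset.univ W m ↔
      TradeRobustOn (Finset.univ \ V) (fun S => W (S ∪ V)) m := by
  constructor
  · -- G robust → G' robust
    rintro hR ⟨j, hj, hjm, X, Y, hXD, hYD, ht, hXW, hYL⟩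
    apply hR
    refine ⟨j, hj, hjm, fun i => X i ∪ V, fun i => Y i ∪ V,
      fun i => Finset.subset_univ _, fun i => Finset.subset_univ _, ?_, hXW, hYL⟩
    intro a
    by_cases haV : a ∈ V
    · simp [Finset.mem_union, haV]
    · simpa [Finset.mem_union, haV] using ht a
  · -- G' robust → G robust
    rintro hR ⟨j, hj, hjm, X, Y, hXD, hYD, ht, hXW, hYL⟩
    have hVX : ∀ i, V ⊆ X i := by
      intro i v hv
      exact ((hV v).mp hv) (X i) (hXW i)
    have hVY : ∀ i, V ⊆ Y i := by
      intro i v hv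
      have hXfull : (Finset.univ.filter (fun i => v ∈ X i)) = Finset.univ := by
        apply Finset.eq_univ_of_forall
        intro i
        simpa using hVX i hv
      have := ht v
      rw [hXfull] at this
      have hYfull : (Finset.univ.filter (fun i => v ∈ Y i)) = Finset.univ := by
        apply Finset.eq_of_subset_of_card_le (Finset.filter_subset _ _)
        omega
      have : i ∈ Finset.univ.filter (fun i => v ∈ Y i) := by
        rw [hYfull]; exact Finset.mem_univ i
      simpa using this
    apply hR
    refine ⟨j, hj, hjm, fun i => X i \ V, fun i => Y i \ V,
      fun i => Finset.sdiff_subset_sdiff (Finset.subset_univ _) (le_refl _),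
      fun i => Finset.sdiff_subset_sdiff (Finset.subset_univ _) (le_refl _), ?_, ?_, ?_⟩
    · intro a
      by_cases haV : a ∈ V
      · simp [Finset.mem_sdiff, haV]
      · simpa [Finset.mem_sdiff, haV] using ht a
    · intro i
      simp only [Finset.sdiff_union_self_eq_union,
        Finset.union_eq_left.mpr (hVX i)]
      exact hXW i
    · intro i
      simp only [Finset.sdiff_union_self_eq_union,
        Finset.union_eq_left.mpr (hVY i)]
      exact hYL i
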